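/- If n ≥ 8 and f : M_{2n} → {0,1} has degree at most 2, then C(f) ≤ n − 2. -/

import Mathlib

/-- A perfect matching of the complete graph on `[N]`, viewed as a fixed-point-free
involution of `Fin N`. -/
def PM (N : ℕ) := {m : Fin N → Fin N // (∀ i, m i ≠ i) ∧ ∀ i, m (m i) = i}

instance (N : ℕ) : Fintype (PM N) := Subtype.fintype _
instance (N : ℕ) : DecidableEq (PM N) := fun a b =>
  decidable_of_iff (a.1 = b.1) Subtype.ext_iff.symm

/-- The edge set of a perfect matching. -/
def PM.edges {N : ℕ} (m : PM N) : Finset (Sym2 (Fin N)) :=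
  Finset.univ.image fun i => s(i, m.1 i)

/-- Two perfect matchings are 2-intersecting: they share at least two edges. -/
def PMTwoIntersecting {N : ℕ} (m1 m2 : PM N) : Prop :=
  2 ≤ (PM.edges m1 ∩ PM.edges m2).card

/-- A family of perfect matchings is 2-intersecting. -/
def PMTwoIntersectingFamily {N : ℕ} (F : Finset (PM N)) : Prop :=
  ∀ m1 ∈ F, ∀ m2 ∈ F, PMTwoIntersecting m1 m2

/-- A valid certificate: a set of pairwise disjoint non-loop unordered pairs. -/
def ValidEdgeSet {N : ℕ} (C : Finset (Sym2 (Fin N))) : Prop :=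
  (∀ e ∈ C, ¬ e.IsDiag) ∧
    ∀ e ∈ C, ∀ f ∈ C, e ≠ f → ∀ a : Fin N, a ∈ e → a ∉ f

/-- `m` satisfies the certificate `C`: every pair of `C` is an edge of `m`. -/
def PMSatisfies {N : ℕ} (m : PM N) (C : Finset (Sym2 (Fin N))) : Prop :=
  ∀ e ∈ C, e ∈ PM.edges m

/-- `C` is a certificate for `m` with respect to `f`. -/
def IsPMCertFor {N : ℕ} (f : PM N → ℝ) (m : PM N) (C : Finset (Sym2 (Fin N))) : Prop :=
  ValidEdgeSet C ∧ PMSatisfies m C ∧ ∀ m' : PM N, PMSatisfies m' C → f m' = f m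

/-- The certificate complexity `C(f, m)`: the minimum size of a certificate for `m`. -/
noncomputable def pmCertComplexityAt {N : ℕ} (f : PM N → ℝ) (m : PM N) : ℕ :=
  sInf {k | ∃ C : Finset (Sym2 (Fin N)), C.card = k ∧ IsPMCertFor f m C}

/-- The certificate complexity `C(f)`: the maximum of `C(f, m)` over all `m`. -/
noncomputable def pmCertComplexity {N : ℕ} (f : PM N → ℝ) : ℕ :=
  Finset.univ.sup fun m : PM N => pmCertComplexityAt f m

/-- The monomial `m ↦ ∏_{{i,j} ∈ S} x_{ij}(m)`. -/
def pmMonomial {N : ℕ} (S : Finset (Sym2 (Fin N))) : PM N → ℝ :=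
  fun m => ∏ e ∈ S, if e ∈ PM.edges m then (1 : ℝ) else 0

/-- `f : M_N → ℝ` has degree at most `d`: it is a real linear combination of monomials
`∏_{{i,j} ∈ S} x_{ij}` with `|S| ≤ d`. -/
def PMDegLE (N d : ℕ) (f : PM N → ℝ) : Prop :=
  f ∈ Submodule.span ℝ {g : PM N → ℝ |
    ∃ S : Finset (Sym2 (Fin N)), S.card ≤ d ∧ g = pmMonomial S}

/-- The degree of `f : M_N → ℝ`. -/
noncomputable def pmDeg (N : ℕ) (f : PM N → ℝ) : ℕ :=
  sInf {d | PMDegLE N d f}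

/-- The coset `U_{i↔j} = {m : m(i) = j}`, for `p = (i, j)`. -/
def PMCoset {N : ℕ} (p : Fin N × Fin N) : Set (PM N) :=
  {m : PM N | m.1 p.1 = p.2}

/-- The coset of all matchings containing the (non-loop) unordered pair `e`. -/
def PMCosetE {N : ℕ} (e : Sym2 (Fin N)) : Set (PM N) :=
  {m : PM N | e ∈ PM.edges m}

/-- `F` is `r`-covered: it is contained in a union of `r` pairwise compatible cosets. -/
def PMRCovered {N : ℕ} (r : ℕ) (F : Finset (PM N)) : Prop :=
  ∃ P : Finset (Sym2 (Fin N)), P.card = r ∧ (∀ e ∈ P, ¬ e.IsDiag) ∧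
    (∀ e ∈ P, ∀ e' ∈ P, (PMCosetE e ∩ PMCosetE e').Nonempty) ∧
    ↑F ⊆ ⋃ e ∈ P, PMCosetE e

/-- A `t`-coset of `M_N`: the set of all perfect matchings containing `t` fixed pairwise
disjoint edges. -/
def IsPMTCoset {N : ℕ} (t : ℕ) (S : Set (PM N)) : Prop :=
  ∃ C : Finset (Sym2 (Fin N)), C.card = t ∧ ValidEdgeSet C ∧
    S = {m : PM N | ∀ e ∈ C, e ∈ PM.edges m}

set_option linter.unusedSectionVars false
set_option maxHeartbeats 1000000

namespace Scratch

variable {N : ℕ}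

/-- conjugate matching -/
def conjPM (m : PM N) (σ : Equiv.Perm (Fin N)) : PM N :=
  ⟨fun x => σ (m.1 (σ⁻¹ x)), by
    constructor
    · intro x h
      have h' : σ (m.1 (σ⁻¹ x)) = σ (σ⁻¹ x) := by
        rw [show σ (m.1 (σ⁻¹ x)) = x from h]; simp
      exact m.2.1 (σ⁻¹ x) (σ.injective h')
    · intro x; simp [m.2.2]⟩

lemma mem_edges_iff (m : PM N) (u v : Fin N) :
    s(u, v) ∈ PM.edges m ↔ m.1 u = v := by
  constructor
  · intro h
    simp only [PM.edges, Finset.mem_image, Finset.mem_univ, true_and] at h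
    obtain ⟨i, hi⟩ := h
    rw [Sym2.eq_iff] at hi
    rcases hi with ⟨rfl, rfl⟩ | ⟨h1, rfl⟩
    · rfl
    · rw [h1, m.2.2]
  · intro h
    simp only [PM.edges, Finset.mem_image, Finset.mem_univ, true_and]
    exact ⟨u, by rw [h]⟩

lemma edge_mem_edges (m : PM N) (u : Fin N) : s(u, m.1 u) ∈ PM.edges m :=
  (mem_edges_iff m u _).2 rfl

lemma not_diag_of_mem_edges (m : PM N) {e : Sym2 (Fin N)} (he : e ∈ PM.edges m) :
    ¬ e.IsDiag := by
  induction e using Sym2.ind with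
  | _ u v =>
    rw [mem_edges_iff] at he
    rw [Sym2.mk_isDiag_iff]
    rintro rfl
    exact m.2.1 u he

lemma eq_edge_of_mem (m : PM N) {e : Sym2 (Fin N)} (he : e ∈ PM.edges m)
    {a : Fin N} (ha : a ∈ e) : e = s(a, m.1 a) := by
  induction e using Sym2.ind with
  | _ u v =>
    rw [mem_edges_iff] at he
    rw [Sym2.mem_iff] at ha
    rcases ha with rfl | rfl
    · rw [he]
    · rw [← he, m.2.2, Sym2.eq_swap]

lemma card_edges (n : ℕ) (m : PM (2 * n)) : (PM.edges m).card = n := by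
  have h1 : (Finset.univ : Finset (Fin (2 * n))).card
      = ∑ e ∈ PM.edges m, (Finset.univ.filter fun i => s(i, m.1 i) = e).card :=
    Finset.card_eq_sum_card_image _ _
  have h2 : ∀ e ∈ PM.edges m, (Finset.univ.filter fun i => s(i, m.1 i) = e).card = 2 := by
    intro e he
    induction e using Sym2.ind with
    | _ u v =>
      rw [mem_edges_iff] at he
      have hset : (Finset.univ.filter fun i => s(i, m.1 i) = s(u, v)) = {u, v} := by
        ext i
        simp only [Finset.mem_filter, Finset.mem_univ, true_and, Finset.mem_insert,
          Finset.mem_singleton, Sym2.eq_iff]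
        constructor
        · rintro (⟨h1, _⟩ | ⟨h1, _⟩)
          · exact Or.inl h1
          · exact Or.inr h1
        · have hvu : m.1 v = u := by rw [← he]; exact m.2.2 u
          rintro (rfl | rfl)
          · exact Or.inl ⟨rfl, he⟩
          · exact Or.inr ⟨rfl, hvu⟩
      rw [hset, Finset.card_insert_of_notMem, Finset.card_singleton]
      simp only [Finset.mem_singleton]
      rintro rfl
      exact m.2.1 u he
  rw [Finset.sum_congr rfl h2, Finset.sum_const, Finset.card_univ, Fintype.card_fin,
    smul_eq_mul] at h1
  omega


lemma conjPM_apply (m : PM N) (σ : Equiv.Perm (Fin N)) (x : Fin N) :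
    (conjPM m σ).1 x = σ (m.1 (σ⁻¹ x)) := rfl

lemma classify (m m' : PM N) (a b p q : Fin N)
    (hab : m.1 a = b) (hpq : m.1 p = q)
    (hap : a ≠ p) (haq : a ≠ q) (hbp : b ≠ p) (hbq : b ≠ q)
    (hagree : ∀ x, x ≠ a → x ≠ b → x ≠ p → x ≠ q → m'.1 x = m.1 x) :
    m' = m ∨ m' = conjPM m (Equiv.swap b p) ∨ m' = conjPM m (Equiv.swap b q) := by
  have hba : m.1 b = a := by rw [← hab]; exact m.2.2 a
  have hqp : m.1 q = p := by rw [← hpq]; exact m.2.2 p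
  have hnab : a ≠ b := fun h => m.2.1 a (by rw [hab, h])
  have hnpq : p ≠ q := fun h => m.2.1 p (by rw [hpq, h])
  -- m' a ∈ {b, p, q}
  have hA : m'.1 a = b ∨ m'.1 a = p ∨ m'.1 a = q := by
    by_contra hcon
    push_neg at hcon
    obtain ⟨h1, h2, h3⟩ := hcon
    have hz : m'.1 (m'.1 a) = a := m'.2.2 a
    have hza : m'.1 a ≠ a := m'.2.1 a
    have := hagree (m'.1 a) hza h1 h2 h3
    rw [this] at hz
    have : m'.1 a = m.1 a := by
      have := congrArg m.1 hz
      rwa [m.2.2] at this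
    exact h1 (by rw [this, hab])
  rcases hA with hA | hA | hA
  · -- m' a = b : then m' = m
    left
    have hBb : m'.1 b = a := by rw [← hA]; exact m'.2.2 a
    have hP : m'.1 p = q := by
      by_contra hPq
      have hw : m'.1 (m'.1 p) = p := m'.2.2 p
      have h1 : m'.1 p ≠ p := m'.2.1 p
      have h2 : m'.1 p ≠ a := fun h => hbp (by rw [← hA, ← h, hw])
      have h3 : m'.1 p ≠ b := fun h => hap (by rw [← hBb, ← h, hw])
      have := hagree (m'.1 p) h2 h3 h1 hPq
      rw [this] at hw
      have h5 : m'.1 p = m.1 p := by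
        have := congrArg m.1 hw
        rwa [m.2.2] at this
      exact hPq (by rw [h5, hpq])
    have hQ : m'.1 q = p := by rw [← hP]; exact m'.2.2 p
    apply Subtype.ext; funext x
    by_cases hxa : x = a
    · rw [hxa, hA, hab]
    by_cases hxb : x = b
    · rw [hxb, hBb, hba]
    by_cases hxp : x = p
    · rw [hxp, hP, hpq]
    by_cases hxq : x = q
    · rw [hxq, hQ, hqp]
    exact hagree x hxa hxb hxp hxq
  · -- m' a = p : conj by swap b p
    right; left
    have hPa : m'.1 p = a := by rw [← hA]; exact m'.2.2 a
    have hB : m'.1 b = q := by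
      by_contra hBq
      have hw : m'.1 (m'.1 b) = b := m'.2.2 b
      have h1 : m'.1 b ≠ b := m'.2.1 b
      have h2 : m'.1 b ≠ a := by
        intro h
        have hb : m'.1 a = b := by rw [← h]; exact hw
        exact hbp (by rw [← hb, hA])
      have h3 : m'.1 b ≠ p := fun h => hnab (by rw [← hPa, ← h, hw])
      have := hagree (m'.1 b) h2 h1 h3 hBq
      rw [this] at hw
      have h5 : m'.1 b = m.1 b := by
        have := congrArg m.1 hw
        rwa [m.2.2] at this
      exact h2 (by rw [h5, hba])
    have hQ : m'.1 q = b := by rw [← hB]; exact m'.2.2 b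
    apply Subtype.ext; funext x
    rw [conjPM_apply, Equiv.swap_inv]
    by_cases hxa : x = a
    · subst hxa
      rw [Equiv.swap_apply_of_ne_of_ne hnab hap, hab, Equiv.swap_apply_left, hA]
    by_cases hxb : x = b
    · subst hxb
      rw [Equiv.swap_apply_left, hpq, Equiv.swap_apply_of_ne_of_ne (Ne.symm hbq) hnpq.symm, hB]
    by_cases hxp : x = p
    · subst hxp
      rw [Equiv.swap_apply_right, hba, Equiv.swap_apply_of_ne_of_ne hnab hap, hPa]
    by_cases hxq : x = q
    · subst hxq
      rw [Equiv.swap_apply_of_ne_of_ne (Ne.symm hbq) hnpq.symm, hqp, Equiv.swap_apply_right, hQ]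
    · rw [Equiv.swap_apply_of_ne_of_ne hxb hxp]
      have hm1 : m.1 x ≠ b := fun h => hxa (by rw [← hba, ← h, m.2.2])
      have hm2 : m.1 x ≠ p := by
        intro h
        have h' := congrArg m.1 h
        rw [m.2.2, hpq] at h'
        exact hxq h'
      rw [Equiv.swap_apply_of_ne_of_ne hm1 hm2]
      exact hagree x hxa hxb hxp hxq
  · -- m' a = q : conj by swap b q
    right; right
    have hQa : m'.1 q = a := by rw [← hA]; exact m'.2.2 a
    have hB : m'.1 b = p := by
      by_contra hBp
      have hw : m'.1 (m'.1 b) = b := m'.2.2 b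
      have h1 : m'.1 b ≠ b := m'.2.1 b
      have h2 : m'.1 b ≠ a := by
        intro h
        have hb : m'.1 a = b := by rw [← h]; exact hw
        exact hbq (by rw [← hb, hA])
      have h3 : m'.1 b ≠ q := fun h => hnab (by rw [← hQa, ← h, hw])
      have := hagree (m'.1 b) h2 h1 hBp h3
      rw [this] at hw
      have h5 : m'.1 b = m.1 b := by
        have := congrArg m.1 hw
        rwa [m.2.2] at this
      exact h2 (by rw [h5, hba])
    have hP : m'.1 p = b := by rw [← hB]; exact m'.2.2 b
    apply Subtype.ext; funext x
    rw [conjPM_apply, Equiv.swap_inv]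
    by_cases hxa : x = a
    · subst hxa
      rw [Equiv.swap_apply_of_ne_of_ne hnab haq, hab, Equiv.swap_apply_left, hA]
    by_cases hxb : x = b
    · subst hxb
      rw [Equiv.swap_apply_left, hqp, Equiv.swap_apply_of_ne_of_ne (Ne.symm hbp) hnpq, hB]
    by_cases hxq : x = q
    · subst hxq
      rw [Equiv.swap_apply_right, hba, Equiv.swap_apply_of_ne_of_ne hnab haq, hQa]
    by_cases hxp : x = p
    · subst hxp
      rw [Equiv.swap_apply_of_ne_of_ne (Ne.symm hbp) hnpq, hpq, Equiv.swap_apply_right, hP]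
    · rw [Equiv.swap_apply_of_ne_of_ne hxb hxq]
      have hm1 : m.1 x ≠ b := fun h => hxa (by rw [← hba, ← h, m.2.2])
      have hm2 : m.1 x ≠ q := by
        intro h
        have h' := congrArg m.1 h
        rw [m.2.2, hqp] at h'
        exact hxp h'
      rw [Equiv.swap_apply_of_ne_of_ne hm1 hm2]
      exact hagree x hxa hxb hxp hxq


/-! ## cube points and functional -/

def sgl (i : Fin 4) : Fin 4 → Bool := fun j => decide (j = i)
def dbl (i j : Fin 4) : Fin 4 → Bool := fun l => decide (l = i) || decide (l = j)
def yTop : Fin 4 → Bool := fun _ => true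
def yBot : Fin 4 → Bool := fun _ => false

noncomputable def Lfun (h : (Fin 4 → Bool) → ℝ) : ℝ :=
  h yTop
    - (h (dbl 0 1) + h (dbl 0 2) + h (dbl 0 3) + h (dbl 1 2) + h (dbl 1 3) + h (dbl 2 3))
    + 2 * (h (sgl 0) + h (sgl 1) + h (sgl 2) + h (sgl 3))
    - 3 * h yBot

lemma fin4_val0 : ((0 : Fin 4) : ℕ) = 0 := rfl
lemma fin4_val1 : ((1 : Fin 4) : ℕ) = 1 := rfl
lemma fin4_val2 : ((2 : Fin 4) : ℕ) = 2 := rfl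
lemma fin4_val3 : ((3 : Fin 4) : ℕ) = 3 := rfl

lemma Lfun_two_coord (p q : Bool → ℝ) (k l : Fin 4) :
    Lfun (fun y => p (y k) * q (y l)) = 0 := by
  fin_cases k <;> fin_cases l <;>
    simp [Lfun, sgl, dbl, yTop, yBot, Fin.ext_iff, fin4_val0, fin4_val1, fin4_val2,
      fin4_val3] <;> ring


variable {N : ℕ}

/-! ## the swapping machinery -/

def tt (V : Fin 4 → Fin 4 → Fin N) (y : Fin 4 → Bool) (k : Fin 4) : Equiv.Perm (Fin N) :=
  if y k then Equiv.swap (V k 1) (V k 2) else 1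

def tau (V : Fin 4 → Fin 4 → Fin N) (y : Fin 4 → Bool) : Equiv.Perm (Fin N) :=
  tt V y 0 * tt V y 1 * tt V y 2 * tt V y 3

def MyM (m : PM N) (V : Fin 4 → Fin 4 → Fin N) (y : Fin 4 → Bool) : PM N :=
  conjPM m (tau V y)

variable {V : Fin 4 → Fin 4 → Fin N}

lemma tt_sq (y : Fin 4 → Bool) (k : Fin 4) : tt V y k * tt V y k = 1 := by
  unfold tt; split
  · exact Equiv.swap_mul_self _ _
  · simp

lemma tt_comm (hV : ∀ k i l j, V k i = V l j → k = l ∧ i = j)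
    (y : Fin 4 → Bool) {k l : Fin 4} (hkl : k ≠ l) :
    Commute (tt V y k) (tt V y l) := by
  unfold tt
  split
  · split
    · apply Equiv.Perm.Disjoint.commute
      intro x
      by_cases hx : x = V l 1 ∨ x = V l 2
      · left
        rcases hx with rfl | rfl
        · exact Equiv.swap_apply_of_ne_of_ne
            (fun h => hkl ((hV _ _ _ _ h).1).symm)
            (fun h => hkl ((hV _ _ _ _ h).1).symm)
        · exact Equiv.swap_apply_of_ne_of_ne
            (fun h => hkl ((hV _ _ _ _ h).1).symm)
            (fun h => hkl ((hV _ _ _ _ h).1).symm)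
      · push_neg at hx
        right
        exact Equiv.swap_apply_of_ne_of_ne hx.1 hx.2
    · exact Commute.one_right _
  · exact Commute.one_left _

private lemma sq_one_mul {G : Type*} [Group G] (a b : G) (h : Commute a b)
    (ha : a * a = 1) (hb : b * b = 1) : (a * b) * (a * b) = 1 := by
  rw [mul_assoc, ← mul_assoc b a b, ← h.eq, mul_assoc a b b, hb, mul_one, ha]

lemma tau_sq (hV : ∀ k i l j, V k i = V l j → k = l ∧ i = j) (y : Fin 4 → Bool) :
    tau V y * tau V y = 1 := by
  have c01 : Commute (tt V y 0) (tt V y 1) := tt_comm hV y (by decide)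
  have c02 : Commute (tt V y 0) (tt V y 2) := tt_comm hV y (by decide)
  have c03 : Commute (tt V y 0) (tt V y 3) := tt_comm hV y (by decide)
  have c12 : Commute (tt V y 1) (tt V y 2) := tt_comm hV y (by decide)
  have c13 : Commute (tt V y 1) (tt V y 3) := tt_comm hV y (by decide)
  have c23 : Commute (tt V y 2) (tt V y 3) := tt_comm hV y (by decide)
  exact sq_one_mul _ _ ((c03.mul_left c13).mul_left c23)
    (sq_one_mul _ _ (c02.mul_left c12)
      (sq_one_mul _ _ c01 (tt_sq y 0) (tt_sq y 1)) (tt_sq y 2)) (tt_sq y 3)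

lemma tau_inv (hV : ∀ k i l j, V k i = V l j → k = l ∧ i = j) (y : Fin 4 → Bool) :
    (tau V y)⁻¹ = tau V y :=
  inv_eq_of_mul_eq_one_right (tau_sq hV y)

lemma tt_fix (y : Fin 4 → Bool) (k : Fin 4) {x : Fin N}
    (h1 : x ≠ V k 1) (h2 : x ≠ V k 2) : tt V y k x = x := by
  unfold tt; split
  · exact Equiv.swap_apply_of_ne_of_ne h1 h2
  · rfl

lemma tt_v1 (y : Fin 4 → Bool) (k : Fin 4) :
    tt V y k (V k 1) = if y k then V k 2 else V k 1 := by
  unfold tt; split <;> simp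

lemma tt_v2 (y : Fin 4 → Bool) (k : Fin 4) :
    tt V y k (V k 2) = if y k then V k 1 else V k 2 := by
  unfold tt; split <;> simp

lemma tau_eq_tt (y : Fin 4 → Bool) (k : Fin 4) (x : Fin N)
    (hfix : ∀ l, l ≠ k → ∀ z, z = x ∨ z = tt V y k x → tt V y l z = z) :
    tau V y x = tt V y k x := by
  have hk4 : ∀ k' : Fin 4, k' = 0 ∨ k' = 1 ∨ k' = 2 ∨ k' = 3 := by decide
  rcases hk4 k with rfl | rfl | rfl | rfl <;> simp only [tau, Equiv.Perm.mul_apply]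
  · rw [hfix 3 (by decide) x (Or.inl rfl), hfix 2 (by decide) x (Or.inl rfl),
      hfix 1 (by decide) x (Or.inl rfl)]
  · rw [hfix 3 (by decide) x (Or.inl rfl), hfix 2 (by decide) x (Or.inl rfl),
      hfix 0 (by decide) _ (Or.inr rfl)]
  · rw [hfix 3 (by decide) x (Or.inl rfl), hfix 1 (by decide) _ (Or.inr rfl),
      hfix 0 (by decide) _ (Or.inr rfl)]
  · rw [hfix 2 (by decide) _ (Or.inr rfl), hfix 1 (by decide) _ (Or.inr rfl),
      hfix 0 (by decide) _ (Or.inr rfl)]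

lemma tau_fix (y : Fin 4 → Bool) {x : Fin N}
    (h : ∀ l, x ≠ V l 1 ∧ x ≠ V l 2) : tau V y x = x := by
  show (tt V y 0 * tt V y 1 * tt V y 2 * tt V y 3) x = x
  rw [Equiv.Perm.mul_apply, Equiv.Perm.mul_apply, Equiv.Perm.mul_apply,
    tt_fix y 3 (h 3).1 (h 3).2, tt_fix y 2 (h 2).1 (h 2).2,
    tt_fix y 1 (h 1).1 (h 1).2, tt_fix y 0 (h 0).1 (h 0).2]

lemma tau_v1 (hV : ∀ k i l j, V k i = V l j → k = l ∧ i = j) (y : Fin 4 → Bool) (k : Fin 4) :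
    tau V y (V k 1) = if y k then V k 2 else V k 1 := by
  rw [tau_eq_tt y k (V k 1), tt_v1]
  intro l hl z hz
  have hz' : z = V k 1 ∨ z = V k 2 := by
    rcases hz with rfl | rfl
    · exact Or.inl rfl
    · rw [tt_v1]; split
      · exact Or.inr rfl
      · exact Or.inl rfl
  rcases hz' with rfl | rfl
  · exact tt_fix y l (fun h => hl (hV _ _ _ _ h).1.symm) (fun h => absurd (hV _ _ _ _ h).2 (by decide))
  · exact tt_fix y l (fun h => absurd (hV _ _ _ _ h).2 (by decide)) (fun h => hl (hV _ _ _ _ h).1.symm)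

lemma tau_v2 (hV : ∀ k i l j, V k i = V l j → k = l ∧ i = j) (y : Fin 4 → Bool) (k : Fin 4) :
    tau V y (V k 2) = if y k then V k 1 else V k 2 := by
  rw [tau_eq_tt y k (V k 2), tt_v2]
  intro l hl z hz
  have hz' : z = V k 1 ∨ z = V k 2 := by
    rcases hz with rfl | rfl
    · exact Or.inr rfl
    · rw [tt_v2]; split
      · exact Or.inl rfl
      · exact Or.inr rfl
  rcases hz' with rfl | rfl
  · exact tt_fix y l (fun h => hl (hV _ _ _ _ h).1.symm) (fun h => absurd (hV _ _ _ _ h).2 (by decide))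
  · exact tt_fix y l (fun h => absurd (hV _ _ _ _ h).2 (by decide)) (fun h => hl (hV _ _ _ _ h).1.symm)

lemma tau_v0 (hV : ∀ k i l j, V k i = V l j → k = l ∧ i = j) (y : Fin 4 → Bool) (k : Fin 4) :
    tau V y (V k 0) = V k 0 :=
  tau_fix y (fun l => ⟨fun h => absurd (hV _ _ _ _ h).2 (by decide),
    fun h => absurd (hV _ _ _ _ h).2 (by decide)⟩)

lemma tau_v3 (hV : ∀ k i l j, V k i = V l j → k = l ∧ i = j) (y : Fin 4 → Bool) (k : Fin 4) :
    tau V y (V k 3) = V k 3 :=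
  tau_fix y (fun l => ⟨fun h => absurd (hV _ _ _ _ h).2 (by decide),
    fun h => absurd (hV _ _ _ _ h).2 (by decide)⟩)


set_option linter.unusedSectionVars false
set_option maxHeartbeats 1000000
variable {N : ℕ} {m : PM N} {V : Fin 4 → Fin 4 → Fin N}

section MyLemmas
variable (hV : ∀ k i l j, V k i = V l j → k = l ∧ i = j)
  (hm01 : ∀ k, m.1 (V k 0) = V k 1) (hm23 : ∀ k, m.1 (V k 2) = V k 3)

include hV hm01 hm23

lemma hm10 : ∀ k, m.1 (V k 1) = V k 0 := by
  intro k; rw [← hm01 k]; exact m.2.2 _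

lemma hm32 : ∀ k, m.1 (V k 3) = V k 2 := by
  intro k; rw [← hm23 k]; exact m.2.2 _

lemma MyM_apply (y : Fin 4 → Bool) (x : Fin N) :
    (MyM m V y).1 x = tau V y (m.1 (tau V y x)) := by
  show tau V y (m.1 ((tau V y)⁻¹ x)) = _
  rw [tau_inv hV]

lemma My_V0 (y : Fin 4 → Bool) (k : Fin 4) :
    (MyM m V y).1 (V k 0) = if y k then V k 2 else V k 1 := by
  rw [MyM_apply hV hm01 hm23, tau_v0 hV, hm01, tau_v1 hV]

lemma My_V1 (y : Fin 4 → Bool) (k : Fin 4) :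
    (MyM m V y).1 (V k 1) = if y k then V k 3 else V k 0 := by
  rw [MyM_apply hV hm01 hm23, tau_v1 hV]
  by_cases hy : y k
  · rw [if_pos hy, if_pos hy, hm23, tau_v3 hV]
  · rw [if_neg hy, if_neg hy, hm10 hV hm01 hm23, tau_v0 hV]

lemma My_V2 (y : Fin 4 → Bool) (k : Fin 4) :
    (MyM m V y).1 (V k 2) = if y k then V k 0 else V k 3 := by
  rw [MyM_apply hV hm01 hm23, tau_v2 hV]
  by_cases hy : y k
  · rw [if_pos hy, if_pos hy, hm10 hV hm01 hm23, tau_v0 hV]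
  · rw [if_neg hy, if_neg hy, hm23, tau_v3 hV]

lemma My_V3 (y : Fin 4 → Bool) (k : Fin 4) :
    (MyM m V y).1 (V k 3) = if y k then V k 1 else V k 2 := by
  rw [MyM_apply hV hm01 hm23, tau_v3 hV, hm32 hV hm01 hm23, tau_v2 hV]

lemma My_out (y : Fin 4 → Bool) (x : Fin N) (hx : ∀ k j, V k j ≠ x) :
    (MyM m V y).1 x = m.1 x := by
  rw [MyM_apply hV hm01 hm23, tau_fix y (fun l => ⟨fun h => hx l 1 h.symm, fun h => hx l 2 h.symm⟩)]
  refine tau_fix y (fun l => ⟨fun h => ?_, fun h => ?_⟩)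
  · apply hx l 0
    have h' := congrArg m.1 h
    rw [m.2.2, hm10 hV hm01 hm23] at h'
    exact h'.symm
  · apply hx l 3
    have h' := congrArg m.1 h
    rw [m.2.2, hm23] at h'
    exact h'.symm

lemma exists_coord (e : Sym2 (Fin N)) :
    ∃ k : Fin 4, ∀ y y' : Fin 4 → Bool, y k = y' k →
      ((e ∈ PM.edges (MyM m V y)) ↔ (e ∈ PM.edges (MyM m V y'))) := by
  induction e using Sym2.ind with
  | _ u v =>
    by_cases hu : ∃ k j, V k j = u
    · obtain ⟨k, j, rfl⟩ := hu
      refine ⟨k, fun y y' h => ?_⟩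
      rw [mem_edges_iff, mem_edges_iff]
      have hj4 : ∀ j' : Fin 4, j' = 0 ∨ j' = 1 ∨ j' = 2 ∨ j' = 3 := by decide
      rcases hj4 j with rfl | rfl | rfl | rfl
      · rw [My_V0 hV hm01 hm23, My_V0 hV hm01 hm23, h]
      · rw [My_V1 hV hm01 hm23, My_V1 hV hm01 hm23, h]
      · rw [My_V2 hV hm01 hm23, My_V2 hV hm01 hm23, h]
      · rw [My_V3 hV hm01 hm23, My_V3 hV hm01 hm23, h]
    · push_neg at hu
      exact ⟨0, fun y y' _ => by
        rw [mem_edges_iff, mem_edges_iff, My_out hV hm01 hm23 y u hu,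
          My_out hV hm01 hm23 y' u hu]⟩

lemma L_monomial (S : Finset (Sym2 (Fin N))) (hS : S.card ≤ 2) :
    Lfun (fun y => pmMonomial S (MyM m V y)) = 0 := by
  have h012 : S.card = 0 ∨ S.card = 1 ∨ S.card = 2 := by omega
  rcases h012 with h | h | h
  · rw [Finset.card_eq_zero] at h
    subst h
    rw [show (fun y => pmMonomial (∅ : Finset (Sym2 (Fin N))) (MyM m V y))
        = fun y => (fun _ : Bool => (1:ℝ)) (y 0) * (fun _ : Bool => (1:ℝ)) (y 0) from by
      funext y; simp [pmMonomial]]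
    exact Lfun_two_coord (fun _ => (1:ℝ)) (fun _ => (1:ℝ)) 0 0
  · rw [Finset.card_eq_one] at h
    obtain ⟨e, rfl⟩ := h
    obtain ⟨k, hk⟩ := exists_coord hV hm01 hm23 e
    rw [show (fun y => pmMonomial ({e} : Finset (Sym2 (Fin N))) (MyM m V y))
        = fun y => (fun b : Bool => if e ∈ PM.edges (MyM m V (fun _ => b)) then (1:ℝ) else 0) (y k)
            * (fun _ : Bool => (1:ℝ)) (y k) from by
      funext y
      rw [pmMonomial, Finset.prod_singleton, mul_one]
      exact if_congr (hk y (fun _ => y k) rfl) rfl rfl]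
    exact Lfun_two_coord (fun b : Bool => if e ∈ PM.edges (MyM m V (fun _ => b)) then (1:ℝ) else 0) (fun _ => (1:ℝ)) k k
  · rw [Finset.card_eq_two] at h
    obtain ⟨e, e', hee', rfl⟩ := h
    obtain ⟨k, hk⟩ := exists_coord hV hm01 hm23 e
    obtain ⟨l, hl⟩ := exists_coord hV hm01 hm23 e'
    rw [show (fun y => pmMonomial ({e, e'} : Finset (Sym2 (Fin N))) (MyM m V y))
        = fun y => (fun b : Bool => if e ∈ PM.edges (MyM m V (fun _ => b)) then (1:ℝ) else 0) (y k)
            * (fun b : Bool => if e' ∈ PM.edges (MyM m V (fun _ => b)) then (1:ℝ) else 0) (y l) from by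
      funext y
      rw [pmMonomial, Finset.prod_pair hee']
      exact congrArg₂ (· * ·) (if_congr (hk y (fun _ => y k) rfl) rfl rfl)
        (if_congr (hl y (fun _ => y l) rfl) rfl rfl)]
    exact Lfun_two_coord (fun b : Bool => if e ∈ PM.edges (MyM m V (fun _ => b)) then (1:ℝ) else 0) (fun b : Bool => if e' ∈ PM.edges (MyM m V (fun _ => b)) then (1:ℝ) else 0) k l

end MyLemmas

lemma Lfun_add (h1 h2 : (Fin 4 → Bool) → ℝ) :
    Lfun (fun y => h1 y + h2 y) = Lfun h1 + Lfun h2 := by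
  simp only [Lfun]; ring

lemma Lfun_mul (c : ℝ) (h1 : (Fin 4 → Bool) → ℝ) :
    Lfun (fun y => c * h1 y) = c * Lfun h1 := by
  simp only [Lfun]; ring

lemma L_span (hV : ∀ k i l j, V k i = V l j → k = l ∧ i = j)
    (hm01 : ∀ k, m.1 (V k 0) = V k 1) (hm23 : ∀ k, m.1 (V k 2) = V k 3)
    (f : PM N → ℝ)
    (hf : f ∈ Submodule.span ℝ {g : PM N → ℝ |
      ∃ S : Finset (Sym2 (Fin N)), S.card ≤ 2 ∧ g = pmMonomial S}) :
    Lfun (fun y => f (MyM m V y)) = 0 := by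
  induction hf using Submodule.span_induction with
  | mem g hg =>
    obtain ⟨S, hS, rfl⟩ := hg
    exact L_monomial hV hm01 hm23 S hS
  | zero => simp [Lfun]
  | add g1 g2 _ _ ih1 ih2 =>
    rw [show (fun y => (g1 + g2) (MyM m V y))
      = fun y => (g1 (MyM m V y)) + (g2 (MyM m V y)) from rfl, Lfun_add, ih1, ih2, add_zero]
  | smul c g _ ih =>
    rw [show (fun y => (c • g) (MyM m V y))
      = fun y => c * (g (MyM m V y)) from rfl, Lfun_mul, ih, mul_zero]


variable {N : ℕ} {m : PM N} {V : Fin 4 → Fin 4 → Fin N}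

lemma MyM_bot : MyM m V yBot = m := by
  have ht : tau V yBot = 1 := by simp [tau, tt, yBot]
  unfold MyM conjPM
  rw [ht]
  apply Subtype.ext
  funext x
  simp

lemma cube_contra (f : PM N → ℝ) (hBool : ∀ m', f m' = 0 ∨ f m' = 1)
    (hf : f ∈ Submodule.span ℝ {g : PM N → ℝ |
      ∃ S : Finset (Sym2 (Fin N)), S.card ≤ 2 ∧ g = pmMonomial S})
    (hV : ∀ k i l j, V k i = V l j → k = l ∧ i = j)
    (hm01 : ∀ k, m.1 (V k 0) = V k 1) (hm23 : ∀ k, m.1 (V k 2) = V k 3)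
    (hdiff : ∀ k : Fin 4, f (MyM m V (sgl k)) ≠ f m) : False := by
  have hid := L_span hV hm01 hm23 f hf
  simp only [Lfun] at hid
  rw [MyM_bot] at hid
  have hb : ∀ m', 0 ≤ f m' ∧ f m' ≤ 1 := by
    intro m'; rcases hBool m' with h | h <;> rw [h] <;> norm_num
  have hs : ∀ k, f (MyM m V (sgl k)) = 1 - f m := by
    intro k
    rcases hBool (MyM m V (sgl k)) with h | h <;> rcases hBool m with h' | h'
    · exact absurd (h.trans h'.symm) (hdiff k)
    · rw [h, h']; norm_num
    · rw [h, h']; norm_num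
    · exact absurd (h.trans h'.symm) (hdiff k)
  rw [hs 0, hs 1, hs 2, hs 3] at hid
  rcases hBool m with hv | hv <;> rw [hv] at hid <;>
    linarith [(hb (MyM m V yTop)).1, (hb (MyM m V yTop)).2,
      (hb (MyM m V (dbl 0 1))).1, (hb (MyM m V (dbl 0 1))).2,
      (hb (MyM m V (dbl 0 2))).1, (hb (MyM m V (dbl 0 2))).2,
      (hb (MyM m V (dbl 0 3))).1, (hb (MyM m V (dbl 0 3))).2,
      (hb (MyM m V (dbl 1 2))).1, (hb (MyM m V (dbl 1 2))).2,
      (hb (MyM m V (dbl 1 3))).1, (hb (MyM m V (dbl 1 3))).2,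
      (hb (MyM m V (dbl 2 3))).1, (hb (MyM m V (dbl 2 3))).2]



def mkV {X : Type*} (a b c d : Fin 4 → X) : Fin 4 → Fin 4 → X :=
  fun k j => if j = 0 then a k else if j = 1 then b k else if j = 2 then c k else d k

def i1 (k : Fin 4) : Fin 8 := ⟨2 * k.1, by have := k.2; omega⟩
def i2 (k : Fin 4) : Fin 8 := ⟨2 * k.1 + 1, by have := k.2; omega⟩

lemma i1_inj {k l : Fin 4} (h : i1 k = i1 l) : k = l := by
  have := congrArg Fin.val h
  simp only [i1] at this
  exact Fin.ext (by omega)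

lemma i2_inj {k l : Fin 4} (h : i2 k = i2 l) : k = l := by
  have := congrArg Fin.val h
  simp only [i2] at this
  exact Fin.ext (by omega)

lemma i1_ne_i2 (k l : Fin 4) : i1 k ≠ i2 l := by
  intro h
  have := congrArg Fin.val h
  simp only [i1, i2] at this
  omega

lemma tau_sgl {N : ℕ} {V : Fin 4 → Fin 4 → Fin N} (k : Fin 4) :
    tau V (sgl k) = Equiv.swap (V k 1) (V k 2) := by
  have hk4 : ∀ k' : Fin 4, k' = 0 ∨ k' = 1 ∨ k' = 2 ∨ k' = 3 := by decide
  rcases hk4 k with rfl | rfl | rfl | rfl <;> simp [tau, tt, sgl]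

end Scratch


/-- If `n ≥ 8` and `f : M_{2n} → {0,1}` has degree at most 2, then
`C(f) ≤ n - 2`. -/
theorem pm_degree_two_cert_complexity_bound
    (n : ℕ) (hn : 8 ≤ n) (f : PM (2 * n) → ℝ)
    (hBool : ∀ m, f m = 0 ∨ f m = 1)
    (hdeg : PMDegLE (2 * n) 2 f) :
    pmCertComplexity f ≤ n - 2 := by
  classical
  by_contra hcon
  have hex : ∃ m : PM (2 * n), ¬ pmCertComplexityAt f m ≤ n - 2 := by
    by_contra h2
    push_neg at h2
    exact hcon (Finset.sup_le fun m _ => h2 m)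
  obtain ⟨m, hm⟩ := hex
  have hnocert : ∀ C : Finset (Sym2 (Fin (2 * n))), C.card = n - 2 → ¬ IsPMCertFor f m C :=
    fun C hC hcert => hm (Nat.sInf_le ⟨C, hC, hcert⟩)
  have hcard := Scratch.card_edges n m
  obtain ⟨T, hTsub, hT8⟩ := Finset.exists_subset_card_eq (s := PM.edges m) (n := 8) (by omega)
  set E : Fin 8 → Sym2 (Fin (2 * n)) :=
    fun i => (T.equivFin.symm (Fin.cast hT8.symm i)).1 with hEdef
  have hE_inj : Function.Injective E := by
    intro i j h
    have h1 : T.equivFin.symm (Fin.cast hT8.symm i) = T.equivFin.symm (Fin.cast hT8.symm j) :=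
      Subtype.ext h
    have h2 := T.equivFin.symm.injective h1
    have h3 := congrArg Fin.val h2
    exact Fin.ext h3
  have hE_mem : ∀ i, E i ∈ PM.edges m :=
    fun i => hTsub (T.equivFin.symm (Fin.cast hT8.symm i)).2
  have hrep : ∀ i : Fin 8, ∃ v, E i = s(v, m.1 v) := by
    intro i
    have hmem := hE_mem i
    simp only [PM.edges, Finset.mem_image, Finset.mem_univ, true_and] at hmem
    obtain ⟨v, hv⟩ := hmem
    exact ⟨v, hv.symm⟩
  choose r hr using hrep
  have same_edge : ∀ x z : Fin (2 * n), (x = z ∨ x = m.1 z) →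
      s(x, m.1 x) = s(z, m.1 z) := by
    intro x z hxz
    rcases hxz with rfl | rfl
    · rfl
    · rw [m.2.2, Sym2.eq_swap]
  have hwin : ∀ k : Fin 4, ∃ c : Fin (2 * n),
      s(c, m.1 c) = E (Scratch.i2 k) ∧
      f (Scratch.conjPM m (Equiv.swap (m.1 (r (Scratch.i1 k))) c)) ≠ f m := by
    intro k
    have hEne : E (Scratch.i1 k) ≠ E (Scratch.i2 k) :=
      fun h => Scratch.i1_ne_i2 k k (hE_inj h)
    have hpairsub : ({E (Scratch.i1 k), E (Scratch.i2 k)} : Finset _) ⊆ PM.edges m := by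
      intro e he
      rcases Finset.mem_insert.1 he with rfl | he
      · exact hE_mem _
      · rw [Finset.mem_singleton] at he
        subst he
        exact hE_mem _
    have hCkcard : (PM.edges m \ {E (Scratch.i1 k), E (Scratch.i2 k)}).card = n - 2 := by
      rw [Finset.card_sdiff_of_subset hpairsub, hcard, Finset.card_pair hEne]
    have hval : ValidEdgeSet (PM.edges m \ {E (Scratch.i1 k), E (Scratch.i2 k)}) := by
      constructor
      · exact fun e he => Scratch.not_diag_of_mem_edges m (Finset.mem_sdiff.1 he).1
      · intro e he e' he' hne a hae hae'
        exact hne ((Scratch.eq_edge_of_mem m (Finset.mem_sdiff.1 he).1 hae).trans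
          (Scratch.eq_edge_of_mem m (Finset.mem_sdiff.1 he').1 hae').symm)
    have hsat : PMSatisfies m (PM.edges m \ {E (Scratch.i1 k), E (Scratch.i2 k)}) :=
      fun e he => (Finset.mem_sdiff.1 he).1
    have hfail := hnocert _ hCkcard
    have hex' : ∃ m', PMSatisfies m' (PM.edges m \ {E (Scratch.i1 k), E (Scratch.i2 k)})
        ∧ f m' ≠ f m := by
      by_contra hno
      push_neg at hno
      exact hfail ⟨hval, hsat, fun m' hm' => hno m' hm'⟩
    obtain ⟨m', hm'sat, hm'ne⟩ := hex'
    have hagree : ∀ x : Fin (2 * n), x ≠ r (Scratch.i1 k) → x ≠ m.1 (r (Scratch.i1 k)) →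
        x ≠ r (Scratch.i2 k) → x ≠ m.1 (r (Scratch.i2 k)) → m'.1 x = m.1 x := by
      intro x h1 h2 h3 h4
      have hxe : s(x, m.1 x) ∈ PM.edges m \ {E (Scratch.i1 k), E (Scratch.i2 k)} := by
        rw [Finset.mem_sdiff]
        refine ⟨Scratch.edge_mem_edges m x, ?_⟩
        simp only [Finset.mem_insert, Finset.mem_singleton]
        push_neg
        constructor
        · intro he
          rw [hr (Scratch.i1 k), Sym2.eq_iff] at he
          rcases he with ⟨hx, _⟩ | ⟨hx, _⟩
          · exact h1 hx
          · exact h2 hx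
        · intro he
          rw [hr (Scratch.i2 k), Sym2.eq_iff] at he
          rcases he with ⟨hx, _⟩ | ⟨hx, _⟩
          · exact h3 hx
          · exact h4 hx
      have hsat' := hm'sat _ hxe
      rw [Scratch.mem_edges_iff] at hsat'
      exact hsat'
    have hap : r (Scratch.i1 k) ≠ r (Scratch.i2 k) := by
      intro h
      exact hEne (by
        rw [hr (Scratch.i1 k), hr (Scratch.i2 k)]
        exact same_edge _ _ (Or.inl h))
    have haq : r (Scratch.i1 k) ≠ m.1 (r (Scratch.i2 k)) := by
      intro h
      exact hEne (by
        rw [hr (Scratch.i1 k), hr (Scratch.i2 k)]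
        exact same_edge _ _ (Or.inr h))
    have hbp : m.1 (r (Scratch.i1 k)) ≠ r (Scratch.i2 k) := by
      intro h
      exact hEne (by
        rw [hr (Scratch.i1 k), hr (Scratch.i2 k)]
        exact (same_edge (r (Scratch.i2 k)) (r (Scratch.i1 k)) (Or.inr h.symm)).symm)
    have hbq : m.1 (r (Scratch.i1 k)) ≠ m.1 (r (Scratch.i2 k)) := by
      intro h
      have h' := congrArg m.1 h
      rw [m.2.2, m.2.2] at h'
      exact hap h'
    have hcl := Scratch.classify m m' (r (Scratch.i1 k)) (m.1 (r (Scratch.i1 k)))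
      (r (Scratch.i2 k)) (m.1 (r (Scratch.i2 k))) rfl rfl hap haq hbp hbq hagree
    rcases hcl with rfl | hc | hc
    · exact absurd rfl hm'ne
    · exact ⟨r (Scratch.i2 k), (hr (Scratch.i2 k)).symm, by rw [← hc]; exact hm'ne⟩
    · refine ⟨m.1 (r (Scratch.i2 k)), ?_, by rw [← hc]; exact hm'ne⟩
      rw [hr (Scratch.i2 k)]
      exact same_edge (m.1 (r (Scratch.i2 k))) (r (Scratch.i2 k)) (Or.inr rfl)
  choose Cv hCv1 hCv2 using hwin
  set V : Fin 4 → Fin 4 → Fin (2 * n) :=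
    Scratch.mkV (fun k => r (Scratch.i1 k)) (fun k => m.1 (r (Scratch.i1 k))) Cv
      (fun k => m.1 (Cv k)) with hVdef
  have hj4 : ∀ j : Fin 4, j = 0 ∨ j = 1 ∨ j = 2 ∨ j = 3 := by decide
  have hV0 : ∀ k, V k 0 = r (Scratch.i1 k) := fun k => by rw [hVdef]; simp [Scratch.mkV]
  have hV1 : ∀ k, V k 1 = m.1 (r (Scratch.i1 k)) := fun k => by rw [hVdef]; simp [Scratch.mkV]
  have hV2 : ∀ k, V k 2 = Cv k := fun k => by rw [hVdef]; simp [Scratch.mkV]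
  have hV3 : ∀ k, V k 3 = m.1 (Cv k) := fun k => by rw [hVdef]; simp [Scratch.mkV]
  have hm01 : ∀ k, m.1 (V k 0) = V k 1 := fun k => by rw [hV0, hV1]
  have hm23 : ∀ k, m.1 (V k 2) = V k 3 := fun k => by rw [hV2, hV3]
  have key : ∀ k (j : Fin 4), s(V k j, m.1 (V k j))
      = E (if (j : ℕ) ≤ 1 then Scratch.i1 k else Scratch.i2 k) := by
    intro k j
    rcases hj4 j with rfl | rfl | rfl | rfl
    · rw [hV0, if_pos (by decide)]
      exact (hr _).symm
    · rw [hV1, if_pos (by decide), m.2.2, Sym2.eq_swap]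
      exact (hr _).symm
    · rw [hV2, if_neg (by decide)]
      exact hCv1 k
    · rw [hV3, if_neg (by decide), m.2.2, Sym2.eq_swap]
      exact hCv1 k
  have hVinj : ∀ k i l j, V k i = V l j → k = l ∧ i = j := by
    intro k i l j h
    have h2 : E (if (i : ℕ) ≤ 1 then Scratch.i1 k else Scratch.i2 k)
        = E (if (j : ℕ) ≤ 1 then Scratch.i1 l else Scratch.i2 l) := by
      rw [← key k i, ← key l j, h]
    have h3 := hE_inj h2
    rcases hj4 i with rfl | rfl | rfl | rfl <;> rcases hj4 j with rfl | rfl | rfl | rfl <;>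
        simp only [Scratch.fin4_val0, Scratch.fin4_val1, Scratch.fin4_val2,
          Scratch.fin4_val3] at h3 <;> norm_num at h3
    · exact ⟨Scratch.i1_inj h3, rfl⟩
    · exfalso
      have hkl := Scratch.i1_inj h3
      subst hkl
      rw [hV0 k, hV1 k] at h
      exact m.2.1 _ h.symm
    · exact absurd h3 (Scratch.i1_ne_i2 k l)
    · exact absurd h3 (Scratch.i1_ne_i2 k l)
    · exfalso
      have hkl := Scratch.i1_inj h3
      subst hkl
      rw [hV1 k, hV0 k] at h
      exact m.2.1 _ h
    · exact ⟨Scratch.i1_inj h3, rfl⟩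
    · exact absurd h3 (Scratch.i1_ne_i2 k l)
    · exact absurd h3 (Scratch.i1_ne_i2 k l)
    · exact absurd h3.symm (Scratch.i1_ne_i2 l k)
    · exact absurd h3.symm (Scratch.i1_ne_i2 l k)
    · exact ⟨Scratch.i2_inj h3, rfl⟩
    · exfalso
      have hkl := Scratch.i2_inj h3
      subst hkl
      rw [hV2 k, hV3 k] at h
      exact m.2.1 _ h.symm
    · exact absurd h3.symm (Scratch.i1_ne_i2 l k)
    · exact absurd h3.symm (Scratch.i1_ne_i2 l k)
    · exfalso
      have hkl := Scratch.i2_inj h3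
      subst hkl
      rw [hV3 k, hV2 k] at h
      exact m.2.1 _ h
    · exact ⟨Scratch.i2_inj h3, rfl⟩
  have hdiff : ∀ k : Fin 4, f (Scratch.MyM m V (Scratch.sgl k)) ≠ f m := by
    intro k
    have hMy : Scratch.MyM m V (Scratch.sgl k)
        = Scratch.conjPM m (Equiv.swap (V k 1) (V k 2)) := by
      unfold Scratch.MyM
      rw [Scratch.tau_sgl k]
    rw [hMy, hV1, hV2]
    exact hCv2 k
  exact Scratch.cube_contra f hBool hdeg hVinj hm01 hm23 hdiff
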